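/- Let H be a hyperbolic group with finite generating set A and word metric d_A, and let φ : H → H be an endomorphism for which the BRP holds (for every p ≥ 0 there exists q ≥ 0 such that for all u, v ∈ H, (u|v) ≤ p implies (φ(u)|φ(v)) ≤ q). Then the image subgroup φ(H) is quasiconvex: there exists q ≥ 0 such that for all g, g′ ∈ φ(H), every point in the image of every discrete geodesic from g to g′ lies within d_A-distance q of φ(H). -/

import Mathlib

namespace Paper

variable {H : Type*} [Group H]

/-- `g` can be written as a product of `n` elements of `A ∪ A⁻¹`. -/
def WordWitness (A : Set H) (g : H) (n : ℕ) : Prop :=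
  ∃ l : List H, l.length = n ∧ (∀ x ∈ l, x ∈ A ∨ x⁻¹ ∈ A) ∧ l.prod = g

/-- The word metric on `H` with respect to the generating set `A`. -/
noncomputable def wd (A : Set H) (g h : H) : ℕ :=
  sInf {n | WordWitness A (g⁻¹ * h) n}

/-- The Gromov product `(u|v)_w` with respect to the word metric for `A`. -/
noncomputable def gp (A : Set H) (w u v : H) : ℝ :=
  ((wd A w u : ℝ) + (wd A w v : ℝ) - (wd A u v : ℝ)) / 2

/-- A discrete geodesic `γ : {0,…,n} → H` from `x` to `y` for the word metric of `A`. -/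
def IsDiscreteGeodesic (A : Set H) (n : ℕ) (γ : ℕ → H) (x y : H) : Prop :=
  γ 0 = x ∧ γ n = y ∧
    ∀ i, i ≤ n → ∀ j, j ≤ n → (wd A (γ i) (γ j) : ℤ) = |(i : ℤ) - (j : ℤ)|

/-- `H` is hyperbolic with respect to `A`: some `δ ≥ 0` satisfies the Rips thin-triangles
condition for discrete geodesics (all three sides are covered since `x, y, z` and the three
geodesics are universally quantified, and hence may be cyclically permuted). -/
def IsHyperbolic (A : Set H) : Prop :=
  ∃ δ : ℝ, 0 ≤ δ ∧ ∀ x y z : H, ∀ n₁ n₂ n₃ : ℕ, ∀ α β γ : ℕ → H,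
    IsDiscreteGeodesic A n₁ α x y → IsDiscreteGeodesic A n₂ β y z →
    IsDiscreteGeodesic A n₃ γ z x → ∀ i, i ≤ n₁ →
      ∃ j, (j ≤ n₂ ∧ (wd A (α i) (β j) : ℝ) ≤ δ) ∨
           (j ≤ n₃ ∧ (wd A (α i) (γ j) : ℝ) ≤ δ)

/-- The bounded reduction property for `φ`, in its Gromov-product formulation:
for every `p ≥ 0` there is `q ≥ 0` such that `(u|v) ≤ p` implies `(φ(u)|φ(v)) ≤ q`. -/
def BRP (A : Set H) (φ : H →* H) : Prop :=
  ∀ p : ℝ, 0 ≤ p → ∃ q : ℝ, 0 ≤ q ∧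
    ∀ u v : H, gp A 1 u v ≤ p → gp A 1 (φ u) (φ v) ≤ q

lemma ww_exists {A : Set H} (hgen : Subgroup.closure A = ⊤) (g : H) :
    ∃ n, WordWitness A g n := by
  have hg : g ∈ (Subgroup.closure A).toSubmonoid := by
    rw [hgen]; trivial
  rw [Subgroup.closure_toSubmonoid] at hg
  obtain ⟨l, hmem, hprod⟩ := Submonoid.exists_list_of_mem_closure hg
  refine ⟨l.length, l, rfl, fun x hx => ?_, hprod⟩
  rcases hmem x hx with h | h
  · exact Or.inl h
  · exact Or.inr h

lemma wd_le {A : Set H} {g h : H} {n : ℕ} (w : WordWitness A (g⁻¹ * h) n) :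
    wd A g h ≤ n := Nat.sInf_le w

lemma wd_spec {A : Set H} (hgen : Subgroup.closure A = ⊤) (g h : H) :
    WordWitness A (g⁻¹ * h) (wd A g h) := by
  have := ww_exists hgen (g⁻¹ * h)
  exact Nat.sInf_mem this

lemma ww_inv {A : Set H} {g : H} {n : ℕ} (h : WordWitness A g n) :
    WordWitness A g⁻¹ n := by
  obtain ⟨l, hl, hmem, hprod⟩ := h
  refine ⟨(l.map fun x => x⁻¹).reverse, by simp [hl], fun x hx => ?_, ?_⟩
  · simp only [List.mem_reverse, List.mem_map] at hx
    obtain ⟨a, ha, rfl⟩ := hx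
    rcases hmem a ha with h | h
    · exact Or.inr (by simpa using h)
    · exact Or.inl h
  · rw [← hprod, ← List.prod_inv_reverse]

lemma ww_mul {A : Set H} {g h : H} {n m : ℕ} (hg : WordWitness A g n)
    (hh : WordWitness A h m) : WordWitness A (g * h) (n + m) := by
  obtain ⟨l1, hl1, hm1, hp1⟩ := hg
  obtain ⟨l2, hl2, hm2, hp2⟩ := hh
  refine ⟨l1 ++ l2, by simp [hl1, hl2], fun x hx => ?_, by simp [hp1, hp2]⟩
  rcases List.mem_append.1 hx with h | h
  · exact hm1 x h
  · exact hm2 x h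

lemma wd_left {A : Set H} (a g h : H) : wd A (a * g) (a * h) = wd A g h := by
  simp [wd, mul_assoc]

lemma wd_self {A : Set H} (g : H) : wd A g g = 0 :=
  Nat.le_zero.1 (wd_le ⟨[], rfl, by simp, by simp⟩)

lemma wd_comm {A : Set H} (g h : H) : wd A g h = wd A h g := by
  have key : ∀ x y : H, wd A x y ≤ wd A y x := by
    intro x y
    rcases Set.eq_empty_or_nonempty {n | WordWitness A (y⁻¹ * x) n} with he | hne
    · have he2 : {n | WordWitness A (x⁻¹ * y) n} = ∅ := by
        rw [Set.eq_empty_iff_forall_notMem]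
        intro n hn
        have : WordWitness A (y⁻¹ * x) n := by
          have := ww_inv hn
          simpa [mul_inv_rev] using this
        exact Set.eq_empty_iff_forall_notMem.1 he n this
      simp [wd, he, he2, Nat.sInf_empty]
    · have := Nat.sInf_mem hne
      have w : WordWitness A (x⁻¹ * y) (wd A y x) := by
        have := ww_inv this
        simpa [mul_inv_rev, wd] using this
      exact wd_le w
  exact le_antisymm (key g h) (key h g)

lemma wd_triangle {A : Set H} (hgen : Subgroup.closure A = ⊤) (g h k : H) :
    wd A g k ≤ wd A g h + wd A h k := by
  have w1 := wd_spec hgen g h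
  have w2 := wd_spec hgen h k
  have := ww_mul w1 w2
  refine wd_le (by simpa [mul_assoc] using this)

lemma wd_one_inv {A : Set H} (x : H) : wd A 1 x⁻¹ = wd A 1 x := by
  have h1 : wd A 1 x⁻¹ = wd A x 1 := by simp [wd]
  rw [h1, wd_comm]


lemma geo_dist {A : Set H} {n : ℕ} {γ : ℕ → H} {x y : H}
    (h : IsDiscreteGeodesic A n γ x y) {i j : ℕ} (hi : i ≤ n) (hj : j ≤ n) :
    (wd A (γ i) (γ j) : ℤ) = |(i : ℤ) - (j : ℤ)| := h.2.2 i hi j hj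

lemma exists_geodesic {A : Set H} (hgen : Subgroup.closure A = ⊤) (x y : H) :
    ∃ γ : ℕ → H, IsDiscreteGeodesic A (wd A x y) γ x y := by
  set m := wd A x y with hm
  obtain ⟨l, hl, hmem, hprod⟩ := wd_spec hgen x y
  refine ⟨fun j => x * (l.take j).prod, by simp, ?_, ?_⟩
  · show x * (l.take m).prod = y
    rw [List.take_of_length_le (by omega), hprod]
    group
  · -- first: upper bound wd (γ i) (γ j) ≤ j - i for i ≤ j ≤ m
    have upper : ∀ i j : ℕ, i ≤ j → j ≤ m →
        wd A (x * (l.take i).prod) (x * (l.take j).prod) ≤ j - i := by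
      intro i j hij hjm
      rw [wd_left]
      have hw : WordWitness A ((l.take i).prod⁻¹ * (l.take j).prod) (j - i) := by
        refine ⟨(l.take j).drop i, ?_, ?_, ?_⟩
        · simp [hl]; omega
        · intro z hz
          exact hmem z (List.mem_of_mem_take (List.mem_of_mem_drop hz))
        · have h1 : (l.take j).take i = l.take i := by
            rw [List.take_take]; congr 1; omega
          have h2 : (l.take j).take i ++ (l.take j).drop i = l.take j :=
            List.take_append_drop i (l.take j)
          calc ((l.take j).drop i).prod
              = (l.take i).prod⁻¹ * ((l.take i).prod * ((l.take j).drop i).prod) := by group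
            _ = (l.take i).prod⁻¹ * (l.take j).prod := by
                rw [← h1, ← List.prod_append, h2]
      exact wd_le hw
    have lower : ∀ i j : ℕ, i ≤ j → j ≤ m →
        (j - i : ℕ) ≤ wd A (x * (l.take i).prod) (x * (l.take j).prod) := by
      intro i j hij hjm
      have t1 : m ≤ wd A x (x * (l.take i).prod) + wd A (x * (l.take i).prod) (x * (l.take j).prod)
          + wd A (x * (l.take j).prod) y := by
        calc m = wd A x y := rfl
          _ ≤ wd A x (x * (l.take j).prod) + wd A (x * (l.take j).prod) y :=
              wd_triangle hgen _ _ _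
          _ ≤ _ := by
              have := wd_triangle hgen x (x * (l.take i).prod) (x * (l.take j).prod)
              omega
      have b1 : wd A x (x * (l.take i).prod) ≤ i := by
        have h0 : x = x * (l.take 0).prod := by simp
        have := upper 0 i (by omega) (by omega)
        rw [← h0] at this; omega
      have b2 : wd A (x * (l.take j).prod) y ≤ m - j := by
        have hy : y = x * (l.take m).prod := by
          rw [List.take_of_length_le (by omega), hprod]; group
        have := upper j m hjm le_rfl
        rw [← hy] at this; omega
      omega
    intro i hi j hj
    rcases le_total i j with hij | hij
    · have h1 := upper i j hij hj
      have h2 := lower i j hij hj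
      have : wd A (x * (l.take i).prod) (x * (l.take j).prod) = j - i := by omega
      rw [this, abs_sub_comm, abs_of_nonneg (by push_cast; omega)]
      push_cast; omega
    · have h1 := upper j i hij hi
      have h2 := lower j i hij hi
      rw [wd_comm]
      have : wd A (x * (l.take j).prod) (x * (l.take i).prod) = i - j := by omega
      rw [this, abs_of_nonneg (by push_cast; omega)]
      push_cast; omega

lemma geo_dist_nat {A : Set H} {n : ℕ} {γ : ℕ → H} {x y : H}
    (h : IsDiscreteGeodesic A n γ x y) {i j : ℕ} (hi : i ≤ n) (hj : j ≤ n) (hij : i ≤ j) :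
    wd A (γ i) (γ j) = j - i := by
  have := h.2.2 i hi j hj
  rw [abs_sub_comm, abs_of_nonneg (by push_cast; omega)] at this
  omega

open Classical in
lemma ivt_up (f : ℕ → ℝ) (m : ℕ) (M : ℝ) (hM : 0 ≤ M) (h0 : f 0 = 0)
    (hstep : ∀ k, k < m → f (k + 1) ≤ f k + M) (t : ℝ) (ht0 : 0 ≤ t) (htm : t ≤ f m) :
    ∃ k ≤ m, t ≤ f k ∧ f k ≤ t + M := by
  have hex : ∃ k, t ≤ f k := ⟨m, htm⟩
  let k0 := Nat.find hex
  have hk0 : t ≤ f k0 := Nat.find_spec hex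
  have hk0m : k0 ≤ m := Nat.find_min' hex htm
  refine ⟨k0, hk0m, hk0, ?_⟩
  rcases Nat.eq_zero_or_pos k0 with h | h
  · rw [h, h0]; linarith
  · have hmin : ¬ t ≤ f (k0 - 1) := Nat.find_min hex (by omega)
    have hst := hstep (k0 - 1) (by omega)
    push_neg at hmin
    have hk : k0 - 1 + 1 = k0 := by omega
    rw [hk] at hst
    linarith

lemma wd_one_left {A : Set H} (u v : H) : wd A 1 (u⁻¹ * v) = wd A u v := by
  rw [← wd_left u 1 (u⁻¹ * v)]; simp [mul_assoc]

/-- If the BRP holds for `φ`, then the image `φ(H)` is a quasiconvex subgroup. -/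
theorem image_quasiconvex_of_brp
    (A : Set H) (hA : A.Finite) (hgen : Subgroup.closure A = ⊤)
    (hhyp : IsHyperbolic A) (φ : H →* H) (hbrp : BRP A φ) :
    ∃ q : ℝ, 0 ≤ q ∧ ∀ g g' : H, g ∈ φ.range → g' ∈ φ.range →
      ∀ n : ℕ, ∀ γ : ℕ → H, IsDiscreteGeodesic A n γ g g' →
        ∀ i, i ≤ n → ∃ h : H, h ∈ φ.range ∧ (wd A (γ i) h : ℝ) ≤ q := by
  obtain ⟨δ, hδ0, hδ⟩ := hhyp
  obtain ⟨q0, hq00, hq0⟩ := hbrp 0 le_rfl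
  -- M bounds the length of images of generators
  set M : ℕ := hA.toFinset.sup (fun a => wd A 1 (φ a)) with hM
  have hMa : ∀ a : H, (a ∈ A ∨ a⁻¹ ∈ A) → wd A 1 (φ a) ≤ M := by
    intro a ha
    rcases ha with ha | ha
    · exact Finset.le_sup (f := fun a => wd A 1 (φ a)) (hA.mem_toFinset.2 ha)
    · have : wd A 1 (φ a) = wd A 1 (φ a⁻¹) := by
        rw [map_inv, wd_one_inv]
      rw [this]
      exact Finset.le_sup (f := fun a => wd A 1 (φ a)) (hA.mem_toFinset.2 ha)
  refine ⟨(M : ℝ) + q0 + 2 * δ, by positivity, ?_⟩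
  rintro g g' ⟨u, rfl⟩ ⟨v, rfl⟩ n γ hγ i hi
  -- translate to a geodesic from 1 to y := φ w
  set w : H := u⁻¹ * v with hw
  set y : H := φ w with hy
  set γ' : ℕ → H := fun j => (φ u)⁻¹ * γ j with hγ'
  have hγ'' : IsDiscreteGeodesic A n γ' 1 y := by
    refine ⟨by simp [γ', hγ.1], by simp [γ', hγ.2.1, hy, hw], fun i hi j hj => ?_⟩
    rw [show γ' i = (φ u)⁻¹ * γ i from rfl, show γ' j = (φ u)⁻¹ * γ j from rfl, wd_left]
    exact hγ.2.2 i hi j hj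
  -- basic distances along γ'
  have hp1 : wd A 1 (γ' i) = i := by
    have := geo_dist_nat hγ'' (Nat.zero_le n) hi (Nat.zero_le i)
    rwa [hγ''.1, Nat.sub_zero] at this
  have hp2 : wd A (γ' i) y = n - i := by
    have := geo_dist_nat hγ'' hi le_rfl hi
    rwa [hγ''.2.1] at this
  have hyn : wd A 1 y = n := by
    have := geo_dist_nat hγ'' (Nat.zero_le n) le_rfl (Nat.zero_le n)
    rwa [hγ''.1, hγ''.2.1, Nat.sub_zero] at this
  -- geodesic from 1 to w in the domain
  set m : ℕ := wd A 1 w with hm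
  obtain ⟨σ, hσ⟩ := exists_geodesic hgen 1 w
  set f : ℕ → ℝ := fun k => gp A 1 (φ (σ k)) y with hf
  -- BRP consequence: |φ(σ k)| ≤ f k + q0
  have key : ∀ k, k ≤ m → (wd A 1 (φ (σ k)) : ℝ) + (wd A (φ (σ k)) y : ℝ)
      - (wd A 1 y : ℝ) ≤ 2 * q0 := by
    intro k hk
    have h1 : gp A 1 ((σ k)⁻¹) ((σ k)⁻¹ * w) ≤ 0 := by
      have e1 : wd A 1 ((σ k)⁻¹) = k := by
        rw [wd_one_inv]
        have := geo_dist_nat hσ (Nat.zero_le m) hk (Nat.zero_le k)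
        rwa [hσ.1, Nat.sub_zero] at this
      have e2 : wd A 1 ((σ k)⁻¹ * w) = m - k := by
        rw [wd_one_left]
        have := geo_dist_nat hσ hk le_rfl hk
        rwa [hσ.2.1] at this
      have e3 : wd A ((σ k)⁻¹) ((σ k)⁻¹ * w) = m := by
        have : wd A ((σ k)⁻¹ * 1) ((σ k)⁻¹ * w) = wd A 1 w := wd_left _ _ _
        simpa using this
      rw [gp, e1, e2, e3]
      have h4 : (k : ℝ) + ((m - k : ℕ) : ℝ) - (m : ℝ) = 0 := by
        push_cast [Nat.cast_sub hk]; ring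
      linarith [h4.le]
    have h2 := hq0 _ _ h1
    rw [gp] at h2
    have e1 : φ ((σ k)⁻¹) = (φ (σ k))⁻¹ := map_inv φ _
    have e2 : φ ((σ k)⁻¹ * w) = (φ (σ k))⁻¹ * y := by rw [map_mul, map_inv, hy]
    rw [e1, e2, wd_one_inv, wd_one_left] at h2
    have e3 : wd A ((φ (σ k))⁻¹) ((φ (σ k))⁻¹ * y) = wd A 1 y := by
      have : wd A ((φ (σ k))⁻¹ * 1) ((φ (σ k))⁻¹ * y) = wd A 1 y := wd_left _ _ _
      simpa using this
    rw [e3] at h2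
    linarith
  -- real triangle inequality
  have tri : ∀ a b c : H, (wd A a c : ℝ) ≤ (wd A a b : ℝ) + (wd A b c : ℝ) := by
    intro a b c; exact_mod_cast wd_triangle hgen a b c
  have symm : ∀ a b : H, (wd A a b : ℝ) = (wd A b a : ℝ) := by
    intro a b; rw [wd_comm]
  -- f 0 = 0 and f m = n
  have hf0 : f 0 = 0 := by
    have : σ 0 = 1 := hσ.1
    simp [hf, gp, this, wd_self]
  have hfm : f m = n := by
    have h1 : σ m = w := hσ.2.1
    simp [hf, gp, h1, ← hy, wd_self, hyn]
  -- step bound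
  have hstep : ∀ k, k < m → f (k + 1) ≤ f k + M := by
    intro k hk
    have hd1 : wd A (σ k) (σ (k + 1)) = 1 := by
      have := geo_dist_nat hσ (i := k) (j := k + 1) (by omega) (by omega) (by omega)
      omega
    have hb : wd A (φ (σ k)) (φ (σ (k + 1))) ≤ M := by
      obtain ⟨l, hl, hmem, hprod⟩ := wd_spec hgen (σ k) (σ (k + 1))
      rw [hd1] at hl
      obtain ⟨b, rfl⟩ := List.length_eq_one_iff.1 hl
      have hb' : b ∈ A ∨ b⁻¹ ∈ A := hmem b (by simp)
      have hbe : (σ k)⁻¹ * σ (k + 1) = b := by simpa using hprod.symm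
      have h2 : φ (σ (k + 1)) = φ (σ k) * φ b := by
        rw [← map_mul]; congr 1
        rw [← hbe]; group
      have e : wd A (φ (σ k)) (φ (σ (k + 1))) = wd A 1 (φ b) := by
        rw [h2]
        simpa using wd_left (φ (σ k)) 1 (φ b)
      rw [e]
      exact hMa b hb'
    have hb' : (wd A (φ (σ k)) (φ (σ (k + 1))) : ℝ) ≤ M := by exact_mod_cast hb
    have t1 := tri 1 (φ (σ k)) (φ (σ (k + 1)))
    have t2 := tri (φ (σ k)) (φ (σ (k + 1))) y
    simp only [hf, gp]
    linarith
  -- find k with i ≤ f k ≤ i + M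
  obtain ⟨k, hkm, hik1, hik2⟩ := ivt_up f m M (by positivity) hf0 hstep i
    (by positivity) (by rw [hfm]; exact_mod_cast hi)
  have hkey : (wd A 1 (φ (σ k)) : ℝ) + (wd A (φ (σ k)) y : ℝ) - (wd A 1 y : ℝ) ≤ 2 * q0 :=
    key k hkm
  have hyn' : ((wd A 1 y : ℕ) : ℝ) = (n : ℝ) := by rw [hyn]
  have hfke : f k = ((wd A 1 (φ (σ k)) : ℝ) + (n : ℝ) - (wd A (φ (σ k)) y : ℝ)) / 2 := by
    simp only [hf, gp, hyn']
  have hfk1 : (i : ℝ) ≤ ((wd A 1 (φ (σ k)) : ℝ) + (n : ℝ) - (wd A (φ (σ k)) y : ℝ)) / 2 := by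
    rw [← hfke]; exact hik1
  have hfk2 : ((wd A 1 (φ (σ k)) : ℝ) + (n : ℝ) - (wd A (φ (σ k)) y : ℝ)) / 2
      ≤ (i : ℝ) + (M : ℝ) := by
    rw [← hfke]; exact hik2
  -- thin triangle 1, y, φ (σ k)
  obtain ⟨β, hβ⟩ := exists_geodesic hgen y (φ (σ k))
  obtain ⟨γ₃, hγ₃⟩ := exists_geodesic hgen (φ (σ k)) 1
  obtain ⟨j, hj⟩ := hδ 1 y (φ (σ k)) n (wd A y (φ (σ k))) (wd A (φ (σ k)) 1) γ' β γ₃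
    hγ'' hβ hγ₃ i hi
  have hni : ((wd A (γ' i) y : ℕ) : ℝ) = (n : ℝ) - (i : ℝ) := by
    rw [hp2]; push_cast [Nat.cast_sub hi]; ring
  refine ⟨φ u * φ (σ k), ⟨u * σ k, by simp⟩, ?_⟩
  have hgi : γ i = φ u * γ' i := by simp [hγ']
  have hwd : wd A (γ i) (φ u * φ (σ k)) = wd A (γ' i) (φ (σ k)) := by
    rw [hgi, wd_left]
  rw [hwd]
  have hM0 : (0 : ℝ) ≤ (M : ℝ) := Nat.cast_nonneg M
  rcases hj with ⟨hjle, hjd⟩ | ⟨hjle, hjd⟩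
  · -- β side: from y to φ (σ k)
    have d1' : ((wd A y (β j) : ℕ) : ℝ) = (j : ℝ) := by
      have := geo_dist_nat hβ (Nat.zero_le _) hjle (Nat.zero_le j)
      rw [hβ.1, Nat.sub_zero] at this
      rw [this]
    have c1 : ((wd A (β j) (φ (σ k)) : ℕ) : ℝ) = (wd A y (φ (σ k)) : ℝ) - (j : ℝ) := by
      have d2 : wd A (β j) (φ (σ k)) = wd A y (φ (σ k)) - j := by
        have := geo_dist_nat hβ hjle le_rfl hjle
        rwa [hβ.2.1] at this
      rw [d2]; push_cast [Nat.cast_sub hjle]; ring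
    have t1 := tri y (β j) (γ' i)
    have t2 := tri (γ' i) (β j) (φ (σ k))
    have hsymm1 := symm (γ' i) (β j)
    have hsymm2 := symm y (γ' i)
    have hsymm3 := symm (φ (σ k)) y
    linarith
  · -- γ₃ side: from φ (σ k) to 1
    have d1' : ((wd A (φ (σ k)) (γ₃ j) : ℕ) : ℝ) = (j : ℝ) := by
      have := geo_dist_nat hγ₃ (Nat.zero_le _) hjle (Nat.zero_le j)
      rw [hγ₃.1, Nat.sub_zero] at this
      rw [this]
    have c1 : ((wd A (γ₃ j) 1 : ℕ) : ℝ) = (wd A (φ (σ k)) 1 : ℝ) - (j : ℝ) := by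
      have d2 : wd A (γ₃ j) 1 = wd A (φ (σ k)) 1 - j := by
        have := geo_dist_nat hγ₃ hjle le_rfl hjle
        rwa [hγ₃.2.1] at this
      rw [d2]; push_cast [Nat.cast_sub hjle]; ring
    have t1 := tri 1 (γ₃ j) (γ' i)
    have t2 := tri (γ' i) (γ₃ j) (φ (σ k))
    have hsymm1 := symm (γ' i) (γ₃ j)
    have hsymm2 := symm (γ₃ j) (φ (σ k))
    have hsymm3 := symm (φ (σ k)) 1
    have hsymm4 := symm 1 (γ₃ j)
    have hL : ((wd A 1 (γ' i) : ℕ) : ℝ) = (i : ℝ) := by rw [hp1]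
    linarith

end Paper
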